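/- arXiv:math/0108184 — 3 statements merged into one kernel-verified Lean document; each statement's English description precedes it below -/
import Mathlib

section
/- Let ξ₁, ξ₂, ξ₃, ξ₄ be real numbers, at least three of which have the same (strict) sign, and suppose |ξ_i| ≥ c₀ for all i and |ξ_min| > 0.99 |ξ_max| (where |ξ_max| = max_i |ξ_i| and |ξ_min| = min_i |ξ_i|). Set ξ = ξ₁+ξ₂+ξ₃+ξ₄. Then |ξ³ - (ξ₁³ + ξ₂³ + ξ₃³ + ξ₄³)| ≥ C·|ξ_max|³ for some absolute constant C > 0. -/
lemma core_res (a b c d M : ℝ) (hM : 0 < M)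
    (ha1 : 0.99*M < |a|) (ha2 : |a| ≤ M)
    (hb1 : 0.99*M < |b|) (hb2 : |b| ≤ M)
    (hc1 : 0.99*M < |c|) (hc2 : |c| ≤ M)
    (hd1 : 0.99*M < |d|) (hd2 : |d| ≤ M)
    (hpa : 0 < a) (hpb : 0 < b) (hpc : 0 < c) :
    M^3 ≤ |(a+b+c+d)^3 - (a^3+b^3+c^3+d^3)| := by
  rw [abs_of_pos hpa] at ha1 ha2
  rw [abs_of_pos hpb] at hb1 hb2
  rw [abs_of_pos hpc] at hc1 hc2
  have key : M^3 ≤ (a+b+c+d)^3 - (a^3+b^3+c^3+d^3) := by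
    rcases lt_trichotomy d 0 with hd | hd | hd
    · rw [abs_of_neg hd] at hd1 hd2
      have hs : 1.97*M ≤ a+b+c+d := by linarith
      have h1 : (1.97*M)^3 ≤ (a+b+c+d)^3 := by
        apply pow_le_pow_left₀ (by positivity) hs
      have h2 : a^3 ≤ M^3 := pow_le_pow_left₀ hpa.le ha2 3
      have h3 : b^3 ≤ M^3 := pow_le_pow_left₀ hpb.le hb2 3
      have h4 : c^3 ≤ M^3 := pow_le_pow_left₀ hpc.le hc2 3
      have h5 : (0.99*M)^3 ≤ (-d)^3 := pow_le_pow_left₀ (by positivity) hd1.le 3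
      ring_nf at h1 h5 ⊢
      nlinarith [sq_nonneg M, hM]
    · exfalso; rw [hd, abs_zero] at hd1; nlinarith
    · rw [abs_of_pos hd] at hd1 hd2
      have hs : 3.96*M ≤ a+b+c+d := by linarith
      have h1 : (3.96*M)^3 ≤ (a+b+c+d)^3 := by
        apply pow_le_pow_left₀ (by positivity) hs
      have h2 : a^3 ≤ M^3 := pow_le_pow_left₀ hpa.le ha2 3
      have h3 : b^3 ≤ M^3 := pow_le_pow_left₀ hpb.le hb2 3
      have h4 : c^3 ≤ M^3 := pow_le_pow_left₀ hpc.le hc2 3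
      have h5 : d^3 ≤ M^3 := pow_le_pow_left₀ hd.le hd2 3
      ring_nf at h1 ⊢
      nlinarith [hM]
  exact key.trans (le_abs_self _)

theorem resonance_lower_bound_region_C :
    ∃ C : ℝ, 0 < C ∧ ∀ ξ₁ ξ₂ ξ₃ ξ₄ c₀ M m : ℝ, 0 < c₀ →
      c₀ ≤ |ξ₁| → c₀ ≤ |ξ₂| → c₀ ≤ |ξ₃| → c₀ ≤ |ξ₄| →
      M = max (max |ξ₁| |ξ₂|) (max |ξ₃| |ξ₄|) →
      m = min (min |ξ₁| |ξ₂|) (min |ξ₃| |ξ₄|) →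
      m > 0.99 * M →
      ((0 < ξ₁ ∧ 0 < ξ₂ ∧ 0 < ξ₃) ∨ (0 < ξ₁ ∧ 0 < ξ₂ ∧ 0 < ξ₄) ∨
       (0 < ξ₁ ∧ 0 < ξ₃ ∧ 0 < ξ₄) ∨ (0 < ξ₂ ∧ 0 < ξ₃ ∧ 0 < ξ₄) ∨
       (ξ₁ < 0 ∧ ξ₂ < 0 ∧ ξ₃ < 0) ∨ (ξ₁ < 0 ∧ ξ₂ < 0 ∧ ξ₄ < 0) ∨
       (ξ₁ < 0 ∧ ξ₃ < 0 ∧ ξ₄ < 0) ∨ (ξ₂ < 0 ∧ ξ₃ < 0 ∧ ξ₄ < 0)) →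
      |(ξ₁ + ξ₂ + ξ₃ + ξ₄)^3 - (ξ₁^3 + ξ₂^3 + ξ₃^3 + ξ₄^3)| ≥ C * M^3 := by
  refine ⟨1, one_pos, ?_⟩
  intro ξ₁ ξ₂ ξ₃ ξ₄ c₀ M m hc₀ h1 h2 h3 h4 hMdef hmdef hm hcase
  have hu1 : |ξ₁| ≤ M := by rw [hMdef]; exact le_max_of_le_left (le_max_left _ _)
  have hu2 : |ξ₂| ≤ M := by rw [hMdef]; exact le_max_of_le_left (le_max_right _ _)
  have hu3 : |ξ₃| ≤ M := by rw [hMdef]; exact le_max_of_le_right (le_max_left _ _)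
  have hu4 : |ξ₄| ≤ M := by rw [hMdef]; exact le_max_of_le_right (le_max_right _ _)
  have hl1 : 0.99*M < |ξ₁| := lt_of_lt_of_le (by rw [hmdef] at hm; exact hm)
    (by exact le_trans (min_le_left _ _) (min_le_left _ _))
  have hl2 : 0.99*M < |ξ₂| := lt_of_lt_of_le (by rw [hmdef] at hm; exact hm)
    (by exact le_trans (min_le_left _ _) (min_le_right _ _))
  have hl3 : 0.99*M < |ξ₃| := lt_of_lt_of_le (by rw [hmdef] at hm; exact hm)
    (by exact le_trans (min_le_right _ _) (min_le_left _ _))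
  have hl4 : 0.99*M < |ξ₄| := lt_of_lt_of_le (by rw [hmdef] at hm; exact hm)
    (by exact le_trans (min_le_right _ _) (min_le_right _ _))
  have hM : 0 < M := lt_of_lt_of_le (lt_of_lt_of_le hc₀ h1) hu1
  have nl1 : 0.99*M < |(-ξ₁)| := by rwa [abs_neg]
  have nu1 : |(-ξ₁)| ≤ M := by rwa [abs_neg]
  have nl2 : 0.99*M < |(-ξ₂)| := by rwa [abs_neg]
  have nu2 : |(-ξ₂)| ≤ M := by rwa [abs_neg]
  have nl3 : 0.99*M < |(-ξ₃)| := by rwa [abs_neg]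
  have nu3 : |(-ξ₃)| ≤ M := by rwa [abs_neg]
  have nl4 : 0.99*M < |(-ξ₄)| := by rwa [abs_neg]
  have nu4 : |(-ξ₄)| ≤ M := by rwa [abs_neg]
  rw [ge_iff_le, one_mul]
  rcases hcase with ⟨p1, p2, p3⟩ | ⟨p1, p2, p3⟩ | ⟨p1, p2, p3⟩ | ⟨p1, p2, p3⟩ |
    ⟨p1, p2, p3⟩ | ⟨p1, p2, p3⟩ | ⟨p1, p2, p3⟩ | ⟨p1, p2, p3⟩
  · exact core_res ξ₁ ξ₂ ξ₃ ξ₄ M hM hl1 hu1 hl2 hu2 hl3 hu3 hl4 hu4 p1 p2 p3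
  · have h := core_res ξ₁ ξ₂ ξ₄ ξ₃ M hM hl1 hu1 hl2 hu2 hl4 hu4 hl3 hu3 p1 p2 p3
    rwa [show (ξ₁+ξ₂+ξ₄+ξ₃)^3 - (ξ₁^3+ξ₂^3+ξ₄^3+ξ₃^3)
      = (ξ₁+ξ₂+ξ₃+ξ₄)^3 - (ξ₁^3+ξ₂^3+ξ₃^3+ξ₄^3) from by ring] at h
  · have h := core_res ξ₁ ξ₃ ξ₄ ξ₂ M hM hl1 hu1 hl3 hu3 hl4 hu4 hl2 hu2 p1 p2 p3
    rwa [show (ξ₁+ξ₃+ξ₄+ξ₂)^3 - (ξ₁^3+ξ₃^3+ξ₄^3+ξ₂^3)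
      = (ξ₁+ξ₂+ξ₃+ξ₄)^3 - (ξ₁^3+ξ₂^3+ξ₃^3+ξ₄^3) from by ring] at h
  · have h := core_res ξ₂ ξ₃ ξ₄ ξ₁ M hM hl2 hu2 hl3 hu3 hl4 hu4 hl1 hu1 p1 p2 p3
    rwa [show (ξ₂+ξ₃+ξ₄+ξ₁)^3 - (ξ₂^3+ξ₃^3+ξ₄^3+ξ₁^3)
      = (ξ₁+ξ₂+ξ₃+ξ₄)^3 - (ξ₁^3+ξ₂^3+ξ₃^3+ξ₄^3) from by ring] at h
  · have h := core_res (-ξ₁) (-ξ₂) (-ξ₃) (-ξ₄) M hM nl1 nu1 nl2 nu2 nl3 nu3 nl4 nu4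
      (by linarith) (by linarith) (by linarith)
    rwa [show (-ξ₁+-ξ₂+-ξ₃+-ξ₄)^3 - ((-ξ₁)^3+(-ξ₂)^3+(-ξ₃)^3+(-ξ₄)^3)
      = -((ξ₁+ξ₂+ξ₃+ξ₄)^3 - (ξ₁^3+ξ₂^3+ξ₃^3+ξ₄^3)) from by ring, abs_neg] at h
  · have h := core_res (-ξ₁) (-ξ₂) (-ξ₄) (-ξ₃) M hM nl1 nu1 nl2 nu2 nl4 nu4 nl3 nu3
      (by linarith) (by linarith) (by linarith)
    rwa [show (-ξ₁+-ξ₂+-ξ₄+-ξ₃)^3 - ((-ξ₁)^3+(-ξ₂)^3+(-ξ₄)^3+(-ξ₃)^3)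
      = -((ξ₁+ξ₂+ξ₃+ξ₄)^3 - (ξ₁^3+ξ₂^3+ξ₃^3+ξ₄^3)) from by ring, abs_neg] at h
  · have h := core_res (-ξ₁) (-ξ₃) (-ξ₄) (-ξ₂) M hM nl1 nu1 nl3 nu3 nl4 nu4 nl2 nu2
      (by linarith) (by linarith) (by linarith)
    rwa [show (-ξ₁+-ξ₃+-ξ₄+-ξ₂)^3 - ((-ξ₁)^3+(-ξ₃)^3+(-ξ₄)^3+(-ξ₂)^3)
      = -((ξ₁+ξ₂+ξ₃+ξ₄)^3 - (ξ₁^3+ξ₂^3+ξ₃^3+ξ₄^3)) from by ring, abs_neg] at h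
  · have h := core_res (-ξ₂) (-ξ₃) (-ξ₄) (-ξ₁) M hM nl2 nu2 nl3 nu3 nl4 nu4 nl1 nu1
      (by linarith) (by linarith) (by linarith)
    rwa [show (-ξ₂+-ξ₃+-ξ₄+-ξ₁)^3 - ((-ξ₂)^3+(-ξ₃)^3+(-ξ₄)^3+(-ξ₁)^3)
      = -((ξ₁+ξ₂+ξ₃+ξ₄)^3 - (ξ₁^3+ξ₂^3+ξ₃^3+ξ₄^3)) from by ring, abs_neg] at h
end

section
/- Let ξ₁, ξ₂, ξ₃, ξ₄ ∈ ℝ with ξ = Σξ_i, and suppose exactly three of the ξ_i are positive and comparable: say ξ₁, ξ₂, ξ₃ > 0 with each ξ_i > 0.99·max_j|ξ_j| for i=1,2,3. Then ξ₁³ + ξ₂³ + ξ₃³ + ξ₄³ - ξ³ has absolute value at least (1/100)·(max_j |ξ_j|)³ provided max_j|ξ_j| ≥ 1. -/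
theorem resonance_lower_bound_three_positive (ξ₁ ξ₂ ξ₃ ξ₄ ξ M : ℝ)
    (hM : M = max (max |ξ₁| |ξ₂|) (max |ξ₃| |ξ₄|)) (hM1 : 1 ≤ M)
    (h1 : ξ₁ > 0.99 * M) (h2 : ξ₂ > 0.99 * M) (h3 : ξ₃ > 0.99 * M)
    (h4 : ξ₄ ≤ 0) (hξ : ξ = ξ₁ + ξ₂ + ξ₃ + ξ₄) :
    |ξ₁^3 + ξ₂^3 + ξ₃^3 + ξ₄^3 - ξ^3| ≥ (1/100) * M^3 := by
  have hb1 : ξ₁ ≤ M := le_trans (le_abs_self _) (hM ▸ le_max_of_le_left (le_max_left _ _))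
  have hb2 : ξ₂ ≤ M := le_trans (le_abs_self _) (hM ▸ le_max_of_le_left (le_max_right _ _))
  have hb4 : -M ≤ ξ₄ := by
    have : |ξ₄| ≤ M := hM ▸ le_max_of_le_right (le_max_right _ _)
    linarith [neg_abs_le ξ₄]
  have hM0 : (0:ℝ) < M := by linarith
  have hξl : 1.97 * M ≤ ξ := by rw [hξ]; nlinarith
  have hcube : (1.97 * M)^3 ≤ ξ^3 := by
    apply pow_le_pow_left₀ (by nlinarith) hξl
  have hne : ξ₁^3 + ξ₂^3 + ξ₃^3 + ξ₄^3 - ξ^3 ≤ -((1/100) * M^3) := by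
    have hb3 : ξ₃ ≤ M := le_trans (le_abs_self _) (hM ▸ le_max_of_le_right (le_max_left _ _))
    have c1 : ξ₁^3 ≤ M^3 := pow_le_pow_left₀ (by nlinarith) hb1 3
    have c2 : ξ₂^3 ≤ M^3 := pow_le_pow_left₀ (by nlinarith) hb2 3
    have c3 : ξ₃^3 ≤ M^3 := pow_le_pow_left₀ (by nlinarith) hb3 3
    have c4 : ξ₄^3 ≤ 0 := Odd.pow_nonpos ⟨1, by norm_num⟩ h4
    nlinarith [pow_pos hM0 3]
  calc |ξ₁^3 + ξ₂^3 + ξ₃^3 + ξ₄^3 - ξ^3| ≥ -(ξ₁^3 + ξ₂^3 + ξ₃^3 + ξ₄^3 - ξ^3) := neg_le_abs _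
    _ ≥ (1/100) * M^3 := by linarith
end

section
/- Let ξ₁, ξ₂, ξ₃, ξ₄ ∈ ℝ with |ξ_max| ≥ 1 and |ξ_min| ≤ 0.99|ξ_max| (with |ξ_max| = max_i|ξ_i|, |ξ_min| = min_i|ξ_i|), and set ξ = Σξ_i. Then for -1/6 < s ≤ 0 there exists a choice of two indices j ≠ k from {1,2,3,4} and constants C such that |ξ|·⟨ξ⟩^s ∏_{i=1}^4 ⟨ξ_i⟩^{-s} ≤ C |ξ_j + ξ_k|^{1/2} |ξ_j - ξ_k|^{1/2} ⟨ξ_l⟩^{-3s/2} ⟨ξ_m⟩^{-3s/2}, where {l,m} = {1,2,3,4} \ {j,k}. -/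
noncomputable def jap (x : ℝ) : ℝ := Real.sqrt (1 + x^2)

lemma jap_pos (x : ℝ) : 0 < jap x := Real.sqrt_pos.mpr (by positivity)

lemma abs_le_jap (x : ℝ) : |x| ≤ jap x := by
  rw [← Real.sqrt_sq_eq_abs]
  exact Real.sqrt_le_sqrt (by nlinarith)

lemma jap_mono {x y : ℝ} (h : |x| ≤ |y|) : jap x ≤ jap y := by
  apply Real.sqrt_le_sqrt
  nlinarith [sq_abs x, sq_abs y, abs_nonneg x]

lemma jap_le {x K : ℝ} (hK : 1 ≤ K) (h : |x| ≤ K) : jap x ≤ Real.sqrt 2 * K := by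
  have h2 : 1 + x^2 ≤ 2 * K^2 := by nlinarith [sq_abs x, abs_nonneg x]
  calc jap x ≤ Real.sqrt (2 * K^2) := Real.sqrt_le_sqrt h2
    _ = Real.sqrt 2 * K := by
        rw [Real.sqrt_mul (by norm_num), Real.sqrt_sq (by linarith)]

lemma key_estimate (s : ℝ) (hs1 : -(1/6) < s) (hs2 : s ≤ 0)
    (a b c d S P M : ℝ)
    (hS : S = a + b + c + d)
    (hP : P = jap a ^ (-s) * jap b ^ (-s) * jap c ^ (-s) * jap d ^ (-s))
    (hM : 1 ≤ M) (ha : |a| = M) (hb : |b| ≤ M) (hc : |c| ≤ M)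
    (hdb : |d| ≤ |b|) (hdc : |d| ≤ |c|) (hd : |d| ≤ 0.99 * M) :
    |S| * jap S ^ s * P ≤
      100 * |a + d| ^ ((1:ℝ)/2) * |a - d| ^ ((1:ℝ)/2) *
        jap b ^ (-(3*s/2)) * jap c ^ (-(3*s/2)) := by
  have hM0 : (0:ℝ) < M := by linarith
  have h1s : (0:ℝ) ≤ 1 + s := by linarith
  have hns : (0:ℝ) ≤ -s := by linarith
  have sqrt2_pos : (0:ℝ) < Real.sqrt 2 := by positivity
  have sqrt2_ge1 : (1:ℝ) ≤ Real.sqrt 2 := by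
    rw [show (1:ℝ) = Real.sqrt 1 by simp]
    exact Real.sqrt_le_sqrt (by norm_num)
  have hSle : |S| ≤ 4 * M := by
    have t1 := abs_add_le (a+b+c) d
    have t2 := abs_add_le (a+b) c
    have t3 := abs_add_le a b
    have hdM : |d| ≤ M := le_trans hdc hc
    rw [hS]; linarith
  have hJS : jap S ≤ Real.sqrt 2 * (4*M) := jap_le (by linarith) (by linarith)
  have hJa : jap a ≤ Real.sqrt 2 * M := jap_le hM (le_of_eq ha)
  -- step 1
  have step1 : |S| * jap S ^ s ≤ (Real.sqrt 2 * 4) * (M * M ^ s) := by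
    have e1 : |S| * jap S ^ s ≤ jap S ^ (1+s) := by
      rw [Real.rpow_add (jap_pos S), Real.rpow_one]
      exact mul_le_mul_of_nonneg_right (abs_le_jap S) (Real.rpow_nonneg (jap_pos S).le s)
    have e2 : jap S ^ (1+s) ≤ (Real.sqrt 2 * (4*M)) ^ (1+s) :=
      Real.rpow_le_rpow (jap_pos S).le hJS h1s
    have e3 : (Real.sqrt 2 * (4*M)) ^ (1+s) = (Real.sqrt 2 * 4) ^ (1+s) * M ^ (1+s) := by
      rw [show Real.sqrt 2 * (4*M) = (Real.sqrt 2 * 4) * M by ring,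
          Real.mul_rpow (by positivity) hM0.le]
    have e4 : (Real.sqrt 2 * 4) ^ (1+s) ≤ Real.sqrt 2 * 4 := by
      calc (Real.sqrt 2 * 4) ^ (1+s) ≤ (Real.sqrt 2 * 4) ^ (1:ℝ) :=
            Real.rpow_le_rpow_of_exponent_le (by linarith) (by linarith)
        _ = Real.sqrt 2 * 4 := Real.rpow_one _
    have e5 : M ^ (1+s) = M * M ^ s := by
      rw [Real.rpow_add hM0, Real.rpow_one]
    calc |S| * jap S ^ s ≤ (Real.sqrt 2 * (4*M)) ^ (1+s) := e1.trans e2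
      _ = (Real.sqrt 2 * 4) ^ (1+s) * M ^ (1+s) := e3
      _ ≤ (Real.sqrt 2 * 4) * M ^ (1+s) :=
          mul_le_mul_of_nonneg_right e4 (Real.rpow_nonneg hM0.le _)
      _ = (Real.sqrt 2 * 4) * (M * M ^ s) := by rw [e5]
  -- step 2
  have step2 : M ^ s * jap a ^ (-s) ≤ Real.sqrt 2 := by
    have e1 : jap a ^ (-s) ≤ (Real.sqrt 2 * M) ^ (-s) :=
      Real.rpow_le_rpow (jap_pos a).le hJa hns
    have e2 : (Real.sqrt 2 * M) ^ (-s) = (Real.sqrt 2) ^ (-s) * M ^ (-s) :=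
      Real.mul_rpow sqrt2_pos.le hM0.le
    have e3 : (Real.sqrt 2) ^ (-s) ≤ Real.sqrt 2 := by
      calc (Real.sqrt 2) ^ (-s) ≤ (Real.sqrt 2) ^ (1:ℝ) :=
            Real.rpow_le_rpow_of_exponent_le sqrt2_ge1 (by linarith)
        _ = Real.sqrt 2 := Real.rpow_one _
    have e4 : M ^ s * M ^ (-s) = 1 := by
      rw [← Real.rpow_add hM0]; simp
    calc M ^ s * jap a ^ (-s) ≤ M ^ s * ((Real.sqrt 2) ^ (-s) * M ^ (-s)) := by
          rw [← e2]; exact mul_le_mul_of_nonneg_left e1 (Real.rpow_nonneg hM0.le s)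
      _ = (Real.sqrt 2) ^ (-s) * (M ^ s * M ^ (-s)) := by ring
      _ = (Real.sqrt 2) ^ (-s) := by rw [e4, mul_one]
      _ ≤ Real.sqrt 2 := e3
  -- step 3
  have step3 : jap d ^ (-s) ≤ jap b ^ (-s/2) * jap c ^ (-s/2) := by
    have e : jap d ^ (-s) = jap d ^ (-s/2) * jap d ^ (-s/2) := by
      rw [← Real.rpow_add (jap_pos d)]; ring_nf
    rw [e]
    exact mul_le_mul (Real.rpow_le_rpow (jap_pos d).le (jap_mono hdb) (by linarith))
      (Real.rpow_le_rpow (jap_pos d).le (jap_mono hdc) (by linarith))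
      (Real.rpow_nonneg (jap_pos d).le _) (Real.rpow_nonneg (jap_pos b).le _)
  have merge : jap b ^ (-s) * jap c ^ (-s) * (jap b ^ (-s/2) * jap c ^ (-s/2))
      = jap b ^ (-(3*s/2)) * jap c ^ (-(3*s/2)) := by
    rw [show jap b ^ (-(3*s/2)) = jap b ^ (-s + -s/2) by ring_nf,
        show jap c ^ (-(3*s/2)) = jap c ^ (-s + -s/2) by ring_nf,
        Real.rpow_add (jap_pos b), Real.rpow_add (jap_pos c)]
    ring
  -- step 4
  have step4 : M / 8 ≤ |a + d| ^ ((1:ℝ)/2) * |a - d| ^ ((1:ℝ)/2) := by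
    rw [← Real.mul_rpow (abs_nonneg _) (abs_nonneg _), ← abs_mul]
    have h1 : (M/8)^2 ≤ |(a + d) * (a - d)| := by
      have h2 : (M/8)^2 ≤ a^2 - d^2 := by
        nlinarith [sq_abs a, sq_abs d, mul_self_le_mul_self (abs_nonneg d) hd]
      calc (M/8)^2 ≤ a^2 - d^2 := h2
        _ = (a+d)*(a-d) := by ring
        _ ≤ |(a+d)*(a-d)| := le_abs_self _
    calc M/8 = Real.sqrt ((M/8)^2) := (Real.sqrt_sq (by linarith)).symm
      _ ≤ Real.sqrt |(a+d)*(a-d)| := Real.sqrt_le_sqrt h1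
      _ = |(a+d)*(a-d)| ^ ((1:ℝ)/2) := Real.sqrt_eq_rpow _
  -- nonnegativity facts
  have nb : (0:ℝ) ≤ jap b ^ (-s) := Real.rpow_nonneg (jap_pos b).le _
  have nc : (0:ℝ) ≤ jap c ^ (-s) := Real.rpow_nonneg (jap_pos c).le _
  have nd : (0:ℝ) ≤ jap d ^ (-s) := Real.rpow_nonneg (jap_pos d).le _
  have nb2 : (0:ℝ) ≤ jap b ^ (-s/2) := Real.rpow_nonneg (jap_pos b).le _
  have nc2 : (0:ℝ) ≤ jap c ^ (-s/2) := Real.rpow_nonneg (jap_pos c).le _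
  have nb3 : (0:ℝ) ≤ jap b ^ (-(3*s/2)) := Real.rpow_nonneg (jap_pos b).le _
  have nc3 : (0:ℝ) ≤ jap c ^ (-(3*s/2)) := Real.rpow_nonneg (jap_pos c).le _
  have na : (0:ℝ) ≤ jap a ^ (-s) := Real.rpow_nonneg (jap_pos a).le _
  have nMs : (0:ℝ) ≤ M ^ s := Real.rpow_nonneg hM0.le _
  have nX : (0:ℝ) ≤ |a + d| ^ ((1:ℝ)/2) := Real.rpow_nonneg (abs_nonneg _) _
  have nY : (0:ℝ) ≤ |a - d| ^ ((1:ℝ)/2) := Real.rpow_nonneg (abs_nonneg _) _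
  have h2sqrt : Real.sqrt 2 * Real.sqrt 2 = 2 := Real.mul_self_sqrt (by norm_num)
  calc |S| * jap S ^ s * P
      ≤ ((Real.sqrt 2 * 4) * (M * M ^ s)) * P := by
        apply mul_le_mul_of_nonneg_right step1
        rw [hP]
        exact mul_nonneg (mul_nonneg (mul_nonneg na nb) nc) nd
    _ = (Real.sqrt 2 * 4) * M * ((M ^ s * jap a ^ (-s)) *
          (jap b ^ (-s) * jap c ^ (-s) * jap d ^ (-s))) := by rw [hP]; ring
    _ ≤ (Real.sqrt 2 * 4) * M * (Real.sqrt 2 *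
          (jap b ^ (-s) * jap c ^ (-s) * (jap b ^ (-s/2) * jap c ^ (-s/2)))) := by
        apply mul_le_mul_of_nonneg_left _ (by positivity)
        apply mul_le_mul step2 _ (mul_nonneg (mul_nonneg nb nc) nd) sqrt2_pos.le
        exact mul_le_mul_of_nonneg_left step3 (mul_nonneg nb nc)
    _ = 8 * M * (jap b ^ (-(3*s/2)) * jap c ^ (-(3*s/2))) := by
        rw [merge]
        linear_combination (4 * M * (jap b ^ (-(3*s/2)) * jap c ^ (-(3*s/2)))) * h2sqrt
    _ ≤ 8 * (8 * (|a + d| ^ ((1:ℝ)/2) * |a - d| ^ ((1:ℝ)/2))) *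
          (jap b ^ (-(3*s/2)) * jap c ^ (-(3*s/2))) := by
        apply mul_le_mul_of_nonneg_right _ (mul_nonneg nb3 nc3)
        linarith
    _ = 64 * (|a + d| ^ ((1:ℝ)/2) * |a - d| ^ ((1:ℝ)/2) *
          (jap b ^ (-(3*s/2)) * jap c ^ (-(3*s/2)))) := by ring
    _ ≤ 100 * (|a + d| ^ ((1:ℝ)/2) * |a - d| ^ ((1:ℝ)/2) *
          (jap b ^ (-(3*s/2)) * jap c ^ (-(3*s/2)))) := by
        have hp : (0:ℝ) ≤ |a + d| ^ ((1:ℝ)/2) * |a - d| ^ ((1:ℝ)/2) *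
            (jap b ^ (-(3*s/2)) * jap c ^ (-(3*s/2))) :=
          mul_nonneg (mul_nonneg nX nY) (mul_nonneg nb3 nc3)
        linarith
    _ = 100 * |a + d| ^ ((1:ℝ)/2) * |a - d| ^ ((1:ℝ)/2) *
          jap b ^ (-(3*s/2)) * jap c ^ (-(3*s/2)) := by ring

theorem symbol_factorization_region_B (s : ℝ) (hs1 : -(1/6) < s) (hs2 : s ≤ 0) :
    ∃ C : ℝ, 0 < C ∧ ∀ ξ : Fin 4 → ℝ, ∀ M : ℝ,
      M = max (max |ξ 0| |ξ 1|) (max |ξ 2| |ξ 3|) →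
      1 ≤ M →
      min (min |ξ 0| |ξ 1|) (min |ξ 2| |ξ 3|) ≤ 0.99 * M →
      ∃ j k l m : Fin 4, ({j, k, l, m} : Finset (Fin 4)) = Finset.univ ∧
        |ξ 0 + ξ 1 + ξ 2 + ξ 3| * jap (ξ 0 + ξ 1 + ξ 2 + ξ 3) ^ s *
            (jap (ξ 0) ^ (-s) * jap (ξ 1) ^ (-s) * jap (ξ 2) ^ (-s) * jap (ξ 3) ^ (-s))
          ≤ C * |ξ j + ξ k| ^ ((1:ℝ)/2) * |ξ j - ξ k| ^ ((1:ℝ)/2) *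
              jap (ξ l) ^ (-(3*s/2)) * jap (ξ m) ^ (-(3*s/2)) := by
  refine ⟨100, by norm_num, ?_⟩
  intro ξ M hMdef hM1 hmin
  have hle : ∀ i, |ξ i| ≤ M := by
    intro i
    rw [hMdef]
    fin_cases i
    · exact le_trans (le_max_left _ _) (le_max_left _ _)
    · exact le_trans (le_max_right _ _) (le_max_left _ _)
    · exact le_trans (le_max_left _ _) (le_max_right _ _)
    · exact le_trans (le_max_right _ _) (le_max_right _ _)
  have hmax : ∃ j : Fin 4, |ξ j| = M := by
    rcases max_choice (max |ξ 0| |ξ 1|) (max |ξ 2| |ξ 3|) with h | h <;>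
      [rcases max_choice |ξ 0| |ξ 1| with h' | h'; rcases max_choice |ξ 2| |ξ 3| with h' | h']
    exacts [⟨0, by rw [hMdef, h, h']⟩, ⟨1, by rw [hMdef, h, h']⟩,
            ⟨2, by rw [hMdef, h, h']⟩, ⟨3, by rw [hMdef, h, h']⟩]
  have hminx : ∃ k : Fin 4, (∀ i, |ξ k| ≤ |ξ i|) ∧ |ξ k| ≤ 0.99 * M := by
    have hex : ∃ k : Fin 4, |ξ k| = min (min |ξ 0| |ξ 1|) (min |ξ 2| |ξ 3|) := by
      rcases min_choice (min |ξ 0| |ξ 1|) (min |ξ 2| |ξ 3|) with h | h <;>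
        [rcases min_choice |ξ 0| |ξ 1| with h' | h'; rcases min_choice |ξ 2| |ξ 3| with h' | h']
      exacts [⟨0, by rw [h, h']⟩, ⟨1, by rw [h, h']⟩, ⟨2, by rw [h, h']⟩, ⟨3, by rw [h, h']⟩]
    obtain ⟨k, hk⟩ := hex
    refine ⟨k, ?_, by rw [hk]; exact hmin⟩
    intro i
    rw [hk]
    fin_cases i
    · exact le_trans (min_le_left _ _) (min_le_left _ _)
    · exact le_trans (min_le_left _ _) (min_le_right _ _)
    · exact le_trans (min_le_right _ _) (min_le_left _ _)
    · exact le_trans (min_le_right _ _) (min_le_right _ _)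
  obtain ⟨j, hj⟩ := hmax
  obtain ⟨k, hkle, hk99⟩ := hminx
  fin_cases j <;> fin_cases k
  · exfalso; linarith
  · exact ⟨0, 1, 2, 3, by decide, key_estimate s hs1 hs2 (ξ 0) (ξ 2) (ξ 3) (ξ 1) _ _ M
      (by ring) (by ring) hM1 hj (hle 2) (hle 3) (hkle 2) (hkle 3) hk99⟩
  · exact ⟨0, 2, 1, 3, by decide, key_estimate s hs1 hs2 (ξ 0) (ξ 1) (ξ 3) (ξ 2) _ _ M
      (by ring) (by ring) hM1 hj (hle 1) (hle 3) (hkle 1) (hkle 3) hk99⟩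
  · exact ⟨0, 3, 1, 2, by decide, key_estimate s hs1 hs2 (ξ 0) (ξ 1) (ξ 2) (ξ 3) _ _ M
      (by ring) (by ring) hM1 hj (hle 1) (hle 2) (hkle 1) (hkle 2) hk99⟩
  · exact ⟨1, 0, 2, 3, by decide, key_estimate s hs1 hs2 (ξ 1) (ξ 2) (ξ 3) (ξ 0) _ _ M
      (by ring) (by ring) hM1 hj (hle 2) (hle 3) (hkle 2) (hkle 3) hk99⟩
  · exfalso; linarith
  · exact ⟨1, 2, 0, 3, by decide, key_estimate s hs1 hs2 (ξ 1) (ξ 0) (ξ 3) (ξ 2) _ _ M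
      (by ring) (by ring) hM1 hj (hle 0) (hle 3) (hkle 0) (hkle 3) hk99⟩
  · exact ⟨1, 3, 0, 2, by decide, key_estimate s hs1 hs2 (ξ 1) (ξ 0) (ξ 2) (ξ 3) _ _ M
      (by ring) (by ring) hM1 hj (hle 0) (hle 2) (hkle 0) (hkle 2) hk99⟩
  · exact ⟨2, 0, 1, 3, by decide, key_estimate s hs1 hs2 (ξ 2) (ξ 1) (ξ 3) (ξ 0) _ _ M
      (by ring) (by ring) hM1 hj (hle 1) (hle 3) (hkle 1) (hkle 3) hk99⟩
  · exact ⟨2, 1, 0, 3, by decide, key_estimate s hs1 hs2 (ξ 2) (ξ 0) (ξ 3) (ξ 1) _ _ M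
      (by ring) (by ring) hM1 hj (hle 0) (hle 3) (hkle 0) (hkle 3) hk99⟩
  · exfalso; linarith
  · exact ⟨2, 3, 0, 1, by decide, key_estimate s hs1 hs2 (ξ 2) (ξ 0) (ξ 1) (ξ 3) _ _ M
      (by ring) (by ring) hM1 hj (hle 0) (hle 1) (hkle 0) (hkle 1) hk99⟩
  · exact ⟨3, 0, 1, 2, by decide, key_estimate s hs1 hs2 (ξ 3) (ξ 1) (ξ 2) (ξ 0) _ _ M
      (by ring) (by ring) hM1 hj (hle 1) (hle 2) (hkle 1) (hkle 2) hk99⟩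
  · exact ⟨3, 1, 0, 2, by decide, key_estimate s hs1 hs2 (ξ 3) (ξ 0) (ξ 2) (ξ 1) _ _ M
      (by ring) (by ring) hM1 hj (hle 0) (hle 2) (hkle 0) (hkle 2) hk99⟩
  · exact ⟨3, 2, 0, 1, by decide, key_estimate s hs1 hs2 (ξ 3) (ξ 0) (ξ 1) (ξ 2) _ _ M
      (by ring) (by ring) hM1 hj (hle 0) (hle 1) (hkle 0) (hkle 1) hk99⟩
  · exfalso; linarith
end
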